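/- Let (A, ·, {·,·}) be a graded Poisson algebra of degree -2 with A^0 = R and A^1 = E, with {e,e'} = ⟨e,e'⟩ for e,e' ∈ E. Define Υ̃(Θ)(e_1,...,e_n) := {e_n,{...,{e_2,{e_1,Θ}}...}} ∈ R for Θ ∈ A^n. Then Υ̃ transforms products into shuffle products: Υ̃(Θ·Θ')(e_1,...,e_{m+n}) = Σ_{τ∈Sh(m,n)} sgn(τ) Υ̃(Θ)(e_{τ(1)},...,e_{τ(m)}) Υ̃(Θ')(e_{τ(m+1)},...,e_{τ(m+n)}) for Θ ∈ A^m, Θ' ∈ A^n, provided {f, e} = 0 and {f,g} = 0 for f,g ∈ A^0, e ∈ A^1. -/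

import Mathlib

open Equiv

/-- `(m,n)`-unshuffles. -/
def isUnshuffle (m n : ℕ) (τ : Equiv.Perm (Fin (m + n))) : Prop :=
  (∀ i j : Fin (m + n), i < j → (j : ℕ) < m → τ i < τ j) ∧
  (∀ i j : Fin (m + n), i < j → m ≤ (i : ℕ) → τ i < τ j)

/-- Iterated derived bracket `{e_k, {…, {e_2, {e_1, Θ}}…}}`. -/
def iterBr {A : Type*} (pb : A → A → A) (Θ : A) (l : List A) : A :=
  l.foldl (fun acc x => pb x acc) Θ

private lemma ofFn_mk_cons {α : Type*} {N M : ℕ} (h : N = M + 1) (e : Fin N → α) :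
    List.ofFn e = e ⟨0, by omega⟩ :: List.ofFn (fun i : Fin M => e ⟨(i : ℕ) + 1, by omega⟩) := by
  subst h
  rw [List.ofFn_succ]
  congr 1

private lemma ofFn_val_congr {α : Type*} {a b : ℕ} (h : a = b) {f : Fin a → α} {g : Fin b → α}
    (hfg : ∀ (x : ℕ) (hx : x < a) (hx' : x < b), f ⟨x, hx⟩ = g ⟨x, hx'⟩) :
    List.ofFn f = List.ofFn g := by
  subst h
  congr 1
  funext i
  simpa using hfg i i.2 i.2

private def extPerm {a : ℕ} (σ : Perm (Fin a)) : Perm (Fin (a + 1)) :=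
  Equiv.Perm.decomposeFin.symm (0, σ)

private lemma extPerm_zero {a : ℕ} (σ : Perm (Fin a)) : extPerm σ 0 = 0 :=
  Equiv.Perm.decomposeFin_symm_apply_zero 0 σ

private lemma extPerm_succ {a : ℕ} (σ : Perm (Fin a)) (x : Fin a) :
    extPerm σ x.succ = (σ x).succ := by
  simp [extPerm]

private lemma sign_extPerm {a : ℕ} (σ : Perm (Fin a)) :
    Equiv.Perm.sign (extPerm σ) = Equiv.Perm.sign σ := by
  simp [extPerm]

private lemma extPerm_mk_succ {a : ℕ} (σ : Perm (Fin a)) (x : ℕ) (hx : x < a)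
    (hx1 : x + 1 < a + 1) : extPerm σ ⟨x + 1, hx1⟩ = (σ ⟨x, hx⟩).succ := by
  have h : (⟨x + 1, hx1⟩ : Fin (a + 1)) = (⟨x, hx⟩ : Fin a).succ := rfl
  rw [h, extPerm_succ]

private lemma extPerm_mk_zero {a : ℕ} (σ : Perm (Fin a)) (h : 0 < a + 1) :
    extPerm σ ⟨0, h⟩ = ⟨0, h⟩ := by
  have h1 : (⟨0, h⟩ : Fin (a + 1)) = 0 := by ext; simp
  rw [h1]; exact extPerm_zero σ

private lemma decomposeFin_fst {a : ℕ} (τ : Perm (Fin (a + 1))) :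
    (Equiv.Perm.decomposeFin τ).1 = τ 0 := by
  have h := Equiv.Perm.decomposeFin_symm_apply_zero (Equiv.Perm.decomposeFin τ).1
    (Equiv.Perm.decomposeFin τ).2
  rw [Prod.mk.eta, Equiv.symm_apply_apply] at h
  exact h.symm


private lemma unshuffle_cases {m n : ℕ} {τ : Perm (Fin (m + n))} (hτ : isUnshuffle m n τ)
    (h0 : 0 < m + n) :
    ((τ ⟨0, h0⟩ : Fin (m + n)) : ℕ) = 0 ∨
      ∃ hm : m < m + n, ((τ ⟨m, hm⟩ : Fin (m + n)) : ℕ) = 0 := by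
  set i₀ := τ.symm ⟨0, h0⟩ with hi₀
  have hτi₀ : τ i₀ = ⟨0, h0⟩ := Equiv.apply_symm_apply τ _
  by_cases hi : (i₀ : ℕ) < m
  · left
    have hz : (i₀ : ℕ) = 0 := by
      by_contra hne
      have hlt : (⟨0, h0⟩ : Fin (m + n)) < i₀ := by rw [Fin.lt_def]; simp; omega
      have h2 := hτ.1 ⟨0, h0⟩ i₀ hlt hi
      rw [hτi₀, Fin.lt_def] at h2
      simp at h2
    have he : i₀ = ⟨0, h0⟩ := Fin.ext hz
    rw [← he, hτi₀]
  · right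
    have hm : m < m + n := lt_of_le_of_lt (not_lt.mp hi) i₀.2
    refine ⟨hm, ?_⟩
    have hz : (i₀ : ℕ) = m := by
      by_contra hne
      have hlt : (⟨m, hm⟩ : Fin (m + n)) < i₀ := by rw [Fin.lt_def]; simp; omega
      have h2 := hτ.2 ⟨m, hm⟩ i₀ hlt (by simp)
      rw [hτi₀, Fin.lt_def] at h2
      simp at h2
    have he : i₀ = ⟨m, hm⟩ := Fin.ext hz
    rw [← he, hτi₀]

private lemma permCongr_cancel {a b : ℕ} (h : a = b) (X : Perm (Fin b)) :
    (finCongr h).permCongr ((finCongr h.symm).permCongr X) = X := by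
  subst h; simp [finCongr_refl, Equiv.permCongr_def, ← Equiv.Perm.one_def]

private lemma permCongr_cancel' {a b : ℕ} (h : a = b) (X : Perm (Fin a)) :
    (finCongr h.symm).permCongr ((finCongr h).permCongr X) = X := by
  subst h; simp [finCongr_refl, Equiv.permCongr_def, ← Equiv.Perm.one_def]

open scoped Classical in
/-- in a graded Poisson algebra of degree `-2` with
`{A⁰,A⁰} = {A⁰,A¹} = 0`, the map `Υ̃(Θ)(e_1,…,e_n) = {e_n,{…,{e_1,Θ}…}}` transforms
products into shuffle products. -/
theorem upsilon_tilde_multiplicative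
    {A : Type*} [Ring A]
    (𝒜 : ℕ → AddSubgroup A)
    (pb : A → A → A)
    (hadd₁ : ∀ x y z : A, pb (x + y) z = pb x z + pb y z)
    (hadd₂ : ∀ x y z : A, pb x (y + z) = pb x y + pb x z)
    (hdeg : ∀ (n m : ℕ) (x y : A), x ∈ 𝒜 n → y ∈ 𝒜 m → pb x y ∈ 𝒜 (n + m - 2))
    (hmul : ∀ (n m : ℕ) (x y : A), x ∈ 𝒜 n → y ∈ 𝒜 m → x * y ∈ 𝒜 (n + m))
    -- graded skew-symmetry:
    (hskew : ∀ (n m : ℕ) (x y : A), x ∈ 𝒜 n → y ∈ 𝒜 m →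
      pb x y = -((Int.negOnePow (((n : ℤ) - 2) * ((m : ℤ) - 2)) : ℤ) • pb y x))
    -- graded Leibniz rule:
    (hleib : ∀ (n m : ℕ) (x y z : A), x ∈ 𝒜 n → y ∈ 𝒜 m →
      pb x (y * z) = pb x y * z
        + (Int.negOnePow (((n : ℤ) - 2) * (m : ℤ)) : ℤ) • (y * pb x z))
    -- `{f,g} = 0` and `{f,e} = 0` in low degrees:
    (h00 : ∀ f g : A, f ∈ 𝒜 0 → g ∈ 𝒜 0 → pb f g = 0)
    (h01 : ∀ f e : A, f ∈ 𝒜 0 → e ∈ 𝒜 1 → pb f e = 0) :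
    ∀ (m n : ℕ) (Θ Θ' : A), Θ ∈ 𝒜 m → Θ' ∈ 𝒜 n →
      ∀ e : Fin (m + n) → A, (∀ i, e i ∈ 𝒜 1) →
        iterBr pb (Θ * Θ') (List.ofFn e)
          = ∑ τ ∈ Finset.univ.filter (isUnshuffle m n),
              (Equiv.Perm.sign τ : ℤ) •
                (iterBr pb Θ (List.ofFn fun i : Fin m => e (τ (Fin.castAdd n i))) *
                  iterBr pb Θ' (List.ofFn fun i : Fin n => e (τ (Fin.natAdd m i)))) := by
  -- basic algebraic facts
  have pb_zero : ∀ x : A, pb x 0 = 0 := by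
    intro x
    have h := hadd₂ x 0 0
    rw [add_zero] at h
    exact (left_eq_add.mp h)
  have iterBr_cons : ∀ (Θ x : A) (l : List A), iterBr pb Θ (x :: l) = iterBr pb (pb x Θ) l :=
    fun _ _ _ => rfl
  have iterBr_zero : ∀ l : List A, iterBr pb 0 l = 0 := by
    intro l; induction l with
    | nil => rfl
    | cons x l ih => rw [iterBr_cons, pb_zero]; exact ih
  have iterBr_add : ∀ (a b : A) (l : List A),
      iterBr pb (a + b) l = iterBr pb a l + iterBr pb b l := by
    intro a b l; induction l generalizing a b with
    | nil => rfl
    | cons x l ih => rw [iterBr_cons, hadd₂, ih]; rfl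
  have pb_smul : ∀ (x : A) (z : ℤ) (a : A), pb x (z • a) = z • pb x a := fun x z a =>
    map_zsmul (AddMonoidHom.mk' (pb x) (hadd₂ x)) z a
  have iterBr_smul : ∀ (z : ℤ) (a : A) (l : List A),
      iterBr pb (z • a) l = z • iterBr pb a l := by
    intro z a l; induction l generalizing a with
    | nil => rfl
    | cons x l ih => rw [iterBr_cons, pb_smul]; exact ih _
  have pb_deg0 : ∀ x f : A, x ∈ 𝒜 1 → f ∈ 𝒜 0 → pb x f = 0 := by
    intro x f hx hf
    rw [hskew 1 0 x f hx hf, h01 f x hf hx, smul_zero, neg_zero]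
  suffices aux : ∀ (K m n : ℕ), m + n = K → ∀ (Θ Θ' : A), Θ ∈ 𝒜 m → Θ' ∈ 𝒜 n →
      ∀ e : Fin (m + n) → A, (∀ i, e i ∈ 𝒜 1) →
        iterBr pb (Θ * Θ') (List.ofFn e)
          = ∑ τ ∈ Finset.univ.filter (isUnshuffle m n),
              (Equiv.Perm.sign τ : ℤ) •
                (iterBr pb Θ (List.ofFn fun i : Fin m => e (τ (Fin.castAdd n i))) *
                  iterBr pb Θ' (List.ofFn fun i : Fin n => e (τ (Fin.natAdd m i)))) by
    intro m n Θ Θ' hΘ hΘ' e he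
    exact aux (m + n) m n rfl Θ Θ' hΘ hΘ' e he
  intro K
  induction K with
  | zero =>
    intro m n hmn Θ Θ' hΘ hΘ' e he
    have hm : m = 0 := by omega
    have hn : n = 0 := by omega
    subst hm; subst hn
    have huniv : ∀ τ : Perm (Fin (0 + 0)), τ = 1 := fun τ => Equiv.ext fun x => x.elim0
    have hfilter : (Finset.univ.filter (isUnshuffle 0 0)) = ({1} : Finset (Perm (Fin (0 + 0)))) := by
      apply Finset.ext; intro τ
      simp only [Finset.mem_filter, Finset.mem_univ, true_and, Finset.mem_singleton]
      constructor
      · intro _; exact huniv τ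
      · intro _; exact ⟨fun i _ _ _ => i.elim0, fun i _ _ _ => i.elim0⟩
    rw [hfilter, Finset.sum_singleton]
    have h1 : ∀ f : Fin 0 → A, List.ofFn f = [] := fun f => rfl
    simp only [h1, map_one]
    show Θ * Θ' = ((1 : ℤˣ) : ℤ) • (Θ * Θ')
    simp
  | succ k IH =>
    intro m n hmn Θ Θ' hΘ hΘ' e he
    have h0 : 0 < m + n := by omega
    set e0 := e ⟨0, h0⟩ with he0
    have hpeel := ofFn_mk_cons hmn e
    rw [hpeel, iterBr_cons, hleib 1 m e0 Θ Θ' (he _) hΘ, iterBr_add, iterBr_smul]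
    rw [← Finset.sum_filter_add_sum_filter_not (Finset.univ.filter (isUnshuffle m n))
      (fun τ => 0 < m ∧ ((τ ⟨0, h0⟩ : Fin (m + n)) : ℕ) = 0)]
    congr 1
    ·
      rcases m with _ | m'
      · -- m = 0 : no unshuffles with τ⁻¹0 in the (empty) first block, and pb e0 Θ = 0
        rw [pb_deg0 e0 Θ (he _) hΘ, zero_mul, iterBr_zero]
        rw [Finset.filter_false_of_mem, Finset.sum_empty]
        intro τ _
        simp
      · -- m = m' + 1
        have hM : m' + n = k := by omega
        set ΘA : A := pb e0 Θ with hΘAdef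
        have hΘA : ΘA ∈ 𝒜 m' := by
          have h1 := hdeg 1 (m' + 1) e0 Θ (he _) hΘ
          rwa [show 1 + (m' + 1) - 2 = m' by omega] at h1
        set eA : Fin (m' + n) → A := fun i => e ⟨(i : ℕ) + 1, by omega⟩ with heA
        have heA1 : ∀ i, eA i ∈ 𝒜 1 := fun i => he _
        have hIH := IH m' n hM ΘA Θ' hΘA hΘ' eA heA1
        -- the forward map
        set Φ : Perm (Fin (m' + n)) → Perm (Fin (m' + 1 + n)) := fun σ =>
          (finCongr hmn.symm).permCongr (extPerm ((finCongr hM).permCongr σ)) with hΦdef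
        have hΦ0 : ∀ σ, ((Φ σ) ⟨0, h0⟩ : ℕ) = 0 := by
          intro σ
          rw [hΦdef]
          simp only [permCongr_apply, finCongr_symm, finCongr_apply_mk]
          rw [extPerm_mk_zero]
          simp
        have hΦs : ∀ (σ : Perm (Fin (m' + n))) (x : ℕ) (hx : x < m' + n)
            (hx1 : x + 1 < m' + 1 + n),
            ((Φ σ) ⟨x + 1, hx1⟩ : ℕ) = (σ ⟨x, hx⟩ : ℕ) + 1 := by
          intro σ x hx hx1
          rw [hΦdef]
          simp only [permCongr_apply, finCongr_symm, finCongr_apply_mk]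
          rw [extPerm_mk_succ _ x (by omega)]
          simp
        -- sign
        have hΦsign : ∀ σ, Equiv.Perm.sign (Φ σ) = Equiv.Perm.sign σ := by
          intro σ
          rw [hΦdef]
          simp [Equiv.Perm.sign_permCongr, sign_extPerm]
        -- unshuffle transfer
        have hΦunsh : ∀ σ, isUnshuffle m' n σ → isUnshuffle (m' + 1) n (Φ σ) := by
          intro σ hσ
          constructor
          · intro i j hij hjm
            rw [Fin.lt_def] at hij ⊢
            obtain ⟨jv, hjv, hjl⟩ : ∃ jv, (j : ℕ) = jv + 1 ∧ jv < m' + n :=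
              ⟨(j : ℕ) - 1, by omega, by omega⟩
            have h2 : ((Φ σ) j : ℕ) = (σ ⟨jv, hjl⟩ : ℕ) + 1 := by
              have hj' : j = ⟨jv + 1, by omega⟩ := Fin.ext hjv
              rw [hj']; exact hΦs σ jv _ _
            rcases Nat.eq_zero_or_pos (i : ℕ) with hi0 | hip
            · have h1 : ((Φ σ) i : ℕ) = 0 := by
                have hi' : i = ⟨0, h0⟩ := Fin.ext hi0
                rw [hi']; exact hΦ0 σ
              omega
            · obtain ⟨iv, hiv, hil⟩ : ∃ iv, (i : ℕ) = iv + 1 ∧ iv < m' + n :=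
                ⟨(i : ℕ) - 1, by omega, by omega⟩
              have h1 : ((Φ σ) i : ℕ) = (σ ⟨iv, hil⟩ : ℕ) + 1 := by
                have hi' : i = ⟨iv + 1, by omega⟩ := Fin.ext hiv
                rw [hi']; exact hΦs σ iv _ _
              have h3 := hσ.1 ⟨iv, hil⟩ ⟨jv, hjl⟩
                (by rw [Fin.mk_lt_mk]; omega) (by show jv < m'; omega)
              rw [Fin.lt_def] at h3
              omega
          · intro i j hij him
            rw [Fin.lt_def] at hij ⊢
            obtain ⟨iv, hiv, hil⟩ : ∃ iv, (i : ℕ) = iv + 1 ∧ iv < m' + n :=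
              ⟨(i : ℕ) - 1, by omega, by omega⟩
            obtain ⟨jv, hjv, hjl⟩ : ∃ jv, (j : ℕ) = jv + 1 ∧ jv < m' + n :=
              ⟨(j : ℕ) - 1, by omega, by omega⟩
            have h1 : ((Φ σ) i : ℕ) = (σ ⟨iv, hil⟩ : ℕ) + 1 := by
              have hi' : i = ⟨iv + 1, by omega⟩ := Fin.ext hiv
              rw [hi']; exact hΦs σ iv _ _
            have h2 : ((Φ σ) j : ℕ) = (σ ⟨jv, hjl⟩ : ℕ) + 1 := by
              have hj' : j = ⟨jv + 1, by omega⟩ := Fin.ext hjv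
              rw [hj']; exact hΦs σ jv _ _
            have h3 := hσ.2 ⟨iv, hil⟩ ⟨jv, hjl⟩
              (by rw [Fin.mk_lt_mk]; omega) (by show m' ≤ iv; omega)
            rw [Fin.lt_def] at h3
            omega
        have hΦunsh' : ∀ σ, isUnshuffle (m' + 1) n (Φ σ) → isUnshuffle m' n σ := by
          intro σ hu
          constructor
          · intro i j hij hjm
            have hi2 : (i : ℕ) < m' + n := i.2
            have hj2 : (j : ℕ) < m' + n := j.2
            have hij' : (i : ℕ) < (j : ℕ) := hij
            have p1 : (i : ℕ) + 1 < m' + 1 + n := by omega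
            have p2 : (j : ℕ) + 1 < m' + 1 + n := by omega
            have h3 := hu.1 ⟨(i : ℕ) + 1, p1⟩ ⟨(j : ℕ) + 1, p2⟩
              (by rw [Fin.mk_lt_mk]; omega) (by show (j : ℕ) + 1 < m' + 1; omega)
            have hv1 : ((Φ σ) ⟨(i : ℕ) + 1, p1⟩ : ℕ) = (σ i : ℕ) + 1 := hΦs σ (i : ℕ) hi2 p1
            have hv2 : ((Φ σ) ⟨(j : ℕ) + 1, p2⟩ : ℕ) = (σ j : ℕ) + 1 := hΦs σ (j : ℕ) hj2 p2
            rw [Fin.lt_def] at h3 ⊢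
            omega
          · intro i j hij him
            have hi2 : (i : ℕ) < m' + n := i.2
            have hj2 : (j : ℕ) < m' + n := j.2
            have hij' : (i : ℕ) < (j : ℕ) := hij
            have p1 : (i : ℕ) + 1 < m' + 1 + n := by omega
            have p2 : (j : ℕ) + 1 < m' + 1 + n := by omega
            have h3 := hu.2 ⟨(i : ℕ) + 1, p1⟩ ⟨(j : ℕ) + 1, p2⟩
              (by rw [Fin.mk_lt_mk]; omega) (by show m' + 1 ≤ (i : ℕ) + 1; omega)
            have hv1 : ((Φ σ) ⟨(i : ℕ) + 1, p1⟩ : ℕ) = (σ i : ℕ) + 1 := hΦs σ (i : ℕ) hi2 p1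
            have hv2 : ((Φ σ) ⟨(j : ℕ) + 1, p2⟩ : ℕ) = (σ j : ℕ) + 1 := hΦs σ (j : ℕ) hj2 p2
            rw [Fin.lt_def] at h3 ⊢
            omega
        -- the inverse map
        set Ψ : Perm (Fin (m' + 1 + n)) → Perm (Fin (m' + n)) := fun τ =>
          (finCongr hM.symm).permCongr ((Equiv.Perm.decomposeFin ((finCongr hmn).permCongr τ)).2)
          with hΨdef
        have hΨΦ : ∀ σ, Ψ (Φ σ) = σ := by
          intro σ
          simp only [hΦdef, hΨdef]
          rw [permCongr_cancel hmn, extPerm, Equiv.apply_symm_apply]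
          exact permCongr_cancel' hM σ
        have hΦΨ : ∀ τ, ((τ ⟨0, h0⟩ : Fin (m' + 1 + n)) : ℕ) = 0 → Φ (Ψ τ) = τ := by
          intro τ hτ0
          simp only [hΦdef, hΨdef]
          rw [permCongr_cancel hM]
          have hfst : (Equiv.Perm.decomposeFin ((finCongr hmn).permCongr τ)).1 = 0 := by
            rw [decomposeFin_fst]
            rw [permCongr_apply]
            ext
            simp only [finCongr_symm, finCongr_apply_coe]
            have h9 : (finCongr hmn.symm) (0 : Fin (k + 1)) = ⟨0, h0⟩ := by ext; simp
            rw [h9, hτ0]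
            simp
          rw [extPerm, ← hfst, Prod.mk.eta, Equiv.symm_apply_apply]
          exact permCongr_cancel' hmn τ
        -- assemble
        have hrest : (List.ofFn fun i : Fin k => e ⟨(i : ℕ) + 1, by omega⟩) = List.ofFn eA :=
          ofFn_val_congr hM.symm (fun x hx hx' => rfl)
        rw [hrest, hIH]
        refine Finset.sum_nbij' Φ Ψ ?_ ?_ ?_ ?_ ?_
        · -- maps into FA
          intro σ hσ
          simp only [Finset.mem_filter, Finset.mem_univ, true_and] at hσ ⊢
          exact ⟨hΦunsh σ hσ, by omega, hΦ0 σ⟩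
        · -- Ψ maps back
          intro τ hτ
          simp only [Finset.mem_filter, Finset.mem_univ, true_and] at hτ ⊢
          obtain ⟨hτu, -, hτ0⟩ := hτ
          have h1 : Φ (Ψ τ) = τ := hΦΨ τ hτ0
          exact hΦunsh' (Ψ τ) (by rw [h1]; exact hτu)
        · intro σ _; exact hΨΦ σ
        · intro τ hτ
          simp only [Finset.mem_filter, Finset.mem_univ, true_and] at hτ
          exact hΦΨ τ hτ.2.2
        · -- values match
          intro σ hσ
          simp only [Finset.mem_filter, Finset.mem_univ, true_and] at hσ
          rw [hΦsign]
          congr 1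
          have hlist1 : (List.ofFn fun i : Fin (m' + 1) => e ((Φ σ) (Fin.castAdd n i)))
              = e0 :: List.ofFn fun i : Fin m' => eA (σ (Fin.castAdd n i)) := by
            rw [ofFn_mk_cons rfl (fun i : Fin (m' + 1) => e ((Φ σ) (Fin.castAdd n i)))]
            congr 1
          have hlist2 : (List.ofFn fun i : Fin n => e ((Φ σ) (Fin.natAdd (m' + 1) i)))
              = List.ofFn fun i : Fin n => eA (σ (Fin.natAdd m' i)) := by
            congr 1
            funext i
            apply congrArg e
            apply Fin.ext
            have hpf2 : (m' + (i : ℕ)) + 1 < m' + 1 + n := by have := i.2; omega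
            have hix : m' + (i : ℕ) < m' + n := by have := i.2; omega
            have harg : Fin.natAdd (m' + 1) i = (⟨(m' + (i : ℕ)) + 1, hpf2⟩ : Fin (m' + 1 + n)) :=
              Fin.ext (by simp [Fin.natAdd]; omega)
            rw [harg, hΦs σ (m' + (i : ℕ)) hix hpf2]
            have harg2 : (⟨m' + (i : ℕ), hix⟩ : Fin (m' + n)) = Fin.natAdd m' i := Fin.ext rfl
            rw [harg2]
          rw [hlist1, hlist2, iterBr_cons]
    ·
      rcases n with _ | n'
      · -- n = 0 : second factor dies and there are no type-B unshuffles
        rw [pb_deg0 e0 Θ' (he _) hΘ', mul_zero, iterBr_zero, smul_zero]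
        rw [Finset.filter_false_of_mem, Finset.sum_empty]
        intro τ hτ
        simp only [Finset.mem_filter, Finset.mem_univ, true_and] at hτ
        intro hN
        rcases unshuffle_cases hτ h0 with hc | ⟨hm2, _⟩
        · exact hN ⟨by omega, hc⟩
        · omega
      · -- n = n' + 1
        have hM : m + n' = k := by omega
        set ΘB : A := pb e0 Θ' with hΘBdef
        have hΘB : ΘB ∈ 𝒜 n' := by
          have h1 := hdeg 1 (n' + 1) e0 Θ' (he _) hΘ'
          rwa [show 1 + (n' + 1) - 2 = n' by omega] at h1
        set eB : Fin (m + n') → A := fun i => e ⟨(i : ℕ) + 1, by omega⟩ with heB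
        have heB1 : ∀ i, eB i ∈ 𝒜 1 := fun i => he _
        have hIH := IH m n' hM Θ ΘB hΘ hΘB eB heB1
        have hmk : m < k + 1 := by omega
        have hmN : m < m + (n' + 1) := by omega
        set c : Perm (Fin (k + 1)) := Fin.cycleRange (⟨m, hmk⟩ : Fin (k + 1)) with hcdef
        set Φ : Perm (Fin (m + n')) → Perm (Fin (m + (n' + 1))) := fun σ =>
          (finCongr hmn.symm).permCongr (extPerm ((finCongr hM).permCongr σ) * c) with hΦdef
        -- value lemmas
        have hΦlt : ∀ (σ : Perm (Fin (m + n'))) (x : ℕ) (hx2 : x < m + n') (hxm : x < m)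
            (hxN : x < m + (n' + 1)),
            ((Φ σ) ⟨x, hxN⟩ : ℕ) = (σ ⟨x, hx2⟩ : ℕ) + 1 := by
          intro σ x hx2 hxm hxN
          rw [hΦdef]
          simp only [permCongr_apply, finCongr_symm, finCongr_apply_mk, Equiv.Perm.mul_apply]
          have hxk : x < k := by omega
          have hc1 : c ⟨x, by omega⟩ = ⟨x + 1, by omega⟩ := by
            rw [hcdef]
            apply Fin.ext
            exact Fin.coe_cycleRange_of_lt (by rw [Fin.mk_lt_mk]; omega)
          rw [hc1, extPerm_mk_succ _ x hxk]
          simp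
        have hΦm : ∀ (σ : Perm (Fin (m + n'))),
            ((Φ σ) ⟨m, hmN⟩ : ℕ) = 0 := by
          intro σ
          rw [hΦdef]
          simp only [permCongr_apply, finCongr_symm, finCongr_apply_mk, Equiv.Perm.mul_apply]
          have hc1 : c ⟨m, by omega⟩ = ⟨0, by omega⟩ := by
            rw [hcdef]
            have h9 := Fin.cycleRange_self (⟨m, hmk⟩ : Fin (k + 1))
            apply Fin.ext
            rw [h9]
            simp
          rw [hc1, extPerm_mk_zero]
          simp
        have hΦgt : ∀ (σ : Perm (Fin (m + n'))) (x : ℕ) (hxm : m ≤ x) (hx2 : x < m + n')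
            (hxN : x + 1 < m + (n' + 1)),
            ((Φ σ) ⟨x + 1, hxN⟩ : ℕ) = (σ ⟨x, hx2⟩ : ℕ) + 1 := by
          intro σ x hxm hx2 hxN
          rw [hΦdef]
          simp only [permCongr_apply, finCongr_symm, finCongr_apply_mk, Equiv.Perm.mul_apply]
          have hxk : x < k := by omega
          have hc1 : c ⟨x + 1, by omega⟩ = ⟨x + 1, by omega⟩ := by
            rw [hcdef]
            exact Fin.cycleRange_of_gt (by rw [Fin.mk_lt_mk]; omega)
          rw [hc1, extPerm_mk_succ _ x hxk]
          simp
        -- sign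
        have hΦsign : ∀ σ, Equiv.Perm.sign (Φ σ) = Equiv.Perm.sign σ * (-1) ^ m := by
          intro σ
          rw [hΦdef]
          simp only [Equiv.Perm.sign_permCongr, map_mul, sign_extPerm, hcdef,
            Fin.sign_cycleRange]
        -- unshuffle transfer
        have hΦunsh : ∀ σ, isUnshuffle m n' σ → isUnshuffle m (n' + 1) (Φ σ) := by
          intro σ hσ
          constructor
          · intro i j hij hjm
            rw [Fin.lt_def] at hij ⊢
            have hjp : (j : ℕ) < m + n' := by omega
            have hip : (i : ℕ) < m + n' := by omega
            have h1 : ((Φ σ) i : ℕ) = (σ ⟨(i : ℕ), hip⟩ : ℕ) + 1 :=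
              hΦlt σ (i : ℕ) hip (by omega) i.2
            have h2 : ((Φ σ) j : ℕ) = (σ ⟨(j : ℕ), hjp⟩ : ℕ) + 1 :=
              hΦlt σ (j : ℕ) hjp (by omega) j.2
            have h3 := hσ.1 ⟨(i : ℕ), hip⟩ ⟨(j : ℕ), hjp⟩
              (by rw [Fin.mk_lt_mk]; omega) (by show (j : ℕ) < m; omega)
            rw [Fin.lt_def] at h3
            omega
          · intro i j hij him
            rw [Fin.lt_def] at hij ⊢
            obtain ⟨jv, hjv, hjl, hjm⟩ : ∃ jv, (j : ℕ) = jv + 1 ∧ jv < m + n' ∧ m ≤ jv := by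
              refine ⟨(j : ℕ) - 1, by omega, by omega, by omega⟩
            have h2 : ((Φ σ) j : ℕ) = (σ ⟨jv, hjl⟩ : ℕ) + 1 := by
              have hj' : j = ⟨jv + 1, by omega⟩ := Fin.ext hjv
              rw [hj']; exact hΦgt σ jv hjm hjl _
            rcases Nat.lt_or_ge m (i : ℕ) with hig | hile
            · obtain ⟨iv, hiv, hil, him2⟩ : ∃ iv, (i : ℕ) = iv + 1 ∧ iv < m + n' ∧ m ≤ iv := by
                refine ⟨(i : ℕ) - 1, by omega, by omega, by omega⟩
              have h1 : ((Φ σ) i : ℕ) = (σ ⟨iv, hil⟩ : ℕ) + 1 := by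
                have hi' : i = ⟨iv + 1, by omega⟩ := Fin.ext hiv
                rw [hi']; exact hΦgt σ iv him2 hil _
              have h3 := hσ.2 ⟨iv, hil⟩ ⟨jv, hjl⟩
                (by rw [Fin.mk_lt_mk]; omega) (by show m ≤ iv; omega)
              rw [Fin.lt_def] at h3
              omega
            · have hi0 : (i : ℕ) = m := by omega
              have h1 : ((Φ σ) i : ℕ) = 0 := by
                have hi' : i = ⟨m, hmN⟩ := Fin.ext hi0
                rw [hi']; exact hΦm σ
              omega
        have hΦunsh' : ∀ σ, isUnshuffle m (n' + 1) (Φ σ) → isUnshuffle m n' σ := by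
          intro σ hu
          constructor
          · intro i j hij hjm
            have hi2 : (i : ℕ) < m + n' := i.2
            have hj2 : (j : ℕ) < m + n' := j.2
            have hij' : (i : ℕ) < (j : ℕ) := hij
            have p1 : (i : ℕ) < m + (n' + 1) := by omega
            have p2 : (j : ℕ) < m + (n' + 1) := by omega
            have h3 := hu.1 ⟨(i : ℕ), p1⟩ ⟨(j : ℕ), p2⟩
              (by rw [Fin.mk_lt_mk]; omega) (by show (j : ℕ) < m; omega)
            have hv1 : ((Φ σ) ⟨(i : ℕ), p1⟩ : ℕ) = (σ i : ℕ) + 1 :=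
              hΦlt σ (i : ℕ) hi2 (by omega) p1
            have hv2 : ((Φ σ) ⟨(j : ℕ), p2⟩ : ℕ) = (σ j : ℕ) + 1 :=
              hΦlt σ (j : ℕ) hj2 (by omega) p2
            rw [Fin.lt_def] at h3 ⊢
            omega
          · intro i j hij him
            have hi2 : (i : ℕ) < m + n' := i.2
            have hj2 : (j : ℕ) < m + n' := j.2
            have hij' : (i : ℕ) < (j : ℕ) := hij
            have p1 : (i : ℕ) + 1 < m + (n' + 1) := by omega
            have p2 : (j : ℕ) + 1 < m + (n' + 1) := by omega
            have h3 := hu.2 ⟨(i : ℕ) + 1, p1⟩ ⟨(j : ℕ) + 1, p2⟩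
              (by rw [Fin.mk_lt_mk]; omega) (by show m ≤ (i : ℕ) + 1; omega)
            have hv1 : ((Φ σ) ⟨(i : ℕ) + 1, p1⟩ : ℕ) = (σ i : ℕ) + 1 :=
              hΦgt σ (i : ℕ) him hi2 p1
            have hv2 : ((Φ σ) ⟨(j : ℕ) + 1, p2⟩ : ℕ) = (σ j : ℕ) + 1 :=
              hΦgt σ (j : ℕ) (by omega) hj2 p2
            rw [Fin.lt_def] at h3 ⊢
            omega
        -- the inverse map
        set Ψ : Perm (Fin (m + (n' + 1))) → Perm (Fin (m + n')) := fun τ =>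
          (finCongr hM.symm).permCongr
            ((Equiv.Perm.decomposeFin ((finCongr hmn).permCongr τ * c⁻¹)).2) with hΨdef
        have hΨΦ : ∀ σ, Ψ (Φ σ) = σ := by
          intro σ
          simp only [hΦdef, hΨdef]
          rw [permCongr_cancel hmn, mul_inv_cancel_right, extPerm, Equiv.apply_symm_apply]
          exact permCongr_cancel' hM σ
        have hΦΨ : ∀ τ, ((τ ⟨m, hmN⟩ : Fin (m + (n' + 1))) : ℕ) = 0 → Φ (Ψ τ) = τ := by
          intro τ hτm
          simp only [hΦdef, hΨdef]
          rw [permCongr_cancel hM]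
          have hfst : (Equiv.Perm.decomposeFin ((finCongr hmn).permCongr τ * c⁻¹)).1 = 0 := by
            rw [decomposeFin_fst, Equiv.Perm.mul_apply]
            have hci : c⁻¹ (0 : Fin (k + 1)) = ⟨m, hmk⟩ := by
              have h9 : c ⟨m, hmk⟩ = 0 := by rw [hcdef]; exact Fin.cycleRange_self _
              rw [← h9]
              exact Equiv.symm_apply_apply c _
            rw [hci, permCongr_apply]
            apply Fin.ext
            simp only [finCongr_symm, finCongr_apply_coe]
            have h9 : (finCongr hmn.symm) (⟨m, hmk⟩ : Fin (k + 1)) = ⟨m, hmN⟩ := by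
              apply Fin.ext; simp
            rw [h9, hτm]
            simp
          rw [extPerm, ← hfst, Prod.mk.eta, Equiv.symm_apply_apply, inv_mul_cancel_right]
          exact permCongr_cancel' hmn τ
        -- assemble
        have hrest : (List.ofFn fun i : Fin k => e ⟨(i : ℕ) + 1, by omega⟩) = List.ofFn eB :=
          ofFn_val_congr hM.symm (fun x hx hx' => rfl)
        rw [hrest, hIH, Finset.smul_sum]
        refine Finset.sum_nbij' Φ Ψ ?_ ?_ ?_ ?_ ?_
        · -- maps into FB
          intro σ hσ
          simp only [Finset.mem_filter, Finset.mem_univ, true_and] at hσ ⊢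
          refine ⟨hΦunsh σ hσ, ?_⟩
          rintro ⟨hm0, hval0⟩
          have h1 : ((Φ σ) ⟨0, h0⟩ : ℕ) = (σ ⟨0, by omega⟩ : ℕ) + 1 :=
            hΦlt σ 0 (by omega) (by omega) h0
          omega
        · -- Ψ maps back
          intro τ hτ
          simp only [Finset.mem_filter, Finset.mem_univ, true_and] at hτ ⊢
          obtain ⟨hτu, hτnQ⟩ := hτ
          have hτm : ((τ ⟨m, hmN⟩ : Fin (m + (n' + 1))) : ℕ) = 0 := by
            rcases unshuffle_cases hτu h0 with hc | ⟨hm2, hc⟩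
            · rcases Nat.eq_zero_or_pos m with hm0 | hm0
              · have h9 : (⟨m, hmN⟩ : Fin (m + (n' + 1))) = ⟨0, h0⟩ := Fin.ext hm0
                rw [h9]; exact hc
              · exact absurd ⟨hm0, hc⟩ hτnQ
            · exact hc
          have h1 : Φ (Ψ τ) = τ := hΦΨ τ hτm
          exact hΦunsh' (Ψ τ) (by rw [h1]; exact hτu)
        · intro σ _; exact hΨΦ σ
        · intro τ hτ
          simp only [Finset.mem_filter, Finset.mem_univ, true_and] at hτ
          obtain ⟨hτu, hτnQ⟩ := hτ
          apply hΦΨ τ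
          rcases unshuffle_cases hτu h0 with hc | ⟨hm2, hc⟩
          · rcases Nat.eq_zero_or_pos m with hm0 | hm0
            · have h9 : (⟨m, hmN⟩ : Fin (m + (n' + 1))) = ⟨0, h0⟩ := Fin.ext hm0
              rw [h9]; exact hc
            · exact absurd ⟨hm0, hc⟩ hτnQ
          · exact hc
        · -- values match
          intro σ hσ
          simp only [Finset.mem_filter, Finset.mem_univ, true_and] at hσ
          have hlist1 : (List.ofFn fun i : Fin m => e ((Φ σ) (Fin.castAdd (n' + 1) i)))
              = List.ofFn fun i : Fin m => eB (σ (Fin.castAdd n' i)) := by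
            congr 1
            funext i
            apply congrArg e
            apply Fin.ext
            exact hΦlt σ (i : ℕ) (by have := i.2; omega) i.2 (by have := i.2; omega)
          have hlist2 : (List.ofFn fun i : Fin (n' + 1) => e ((Φ σ) (Fin.natAdd m i)))
              = e0 :: List.ofFn fun i : Fin n' => eB (σ (Fin.natAdd m i)) := by
            rw [ofFn_mk_cons rfl (fun i : Fin (n' + 1) => e ((Φ σ) (Fin.natAdd m i)))]
            have hhead : e ((Φ σ) (Fin.natAdd m (⟨0, Nat.succ_pos n'⟩ : Fin (n' + 1)))) = e0 := by
              apply congrArg e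
              apply Fin.ext
              exact hΦm σ
            rw [hhead]
            congr 1
            congr 1
            funext i
            apply congrArg e
            apply Fin.ext
            exact hΦgt σ (m + (i : ℕ)) (by omega) (by have := i.2; omega) (by have := i.2; omega)
          rw [hlist1, hlist2, iterBr_cons, hΦsign σ]
          rw [smul_smul]
          congr 1
          rw [show (((1 : ℕ) : ℤ) - 2) * ((m : ℕ) : ℤ) = -((m : ℕ) : ℤ) by push_cast; ring]
          rw [Int.negOnePow_neg, Int.coe_negOnePow_natCast]
          rw [Units.val_mul]
          rw [mul_comm]
          congr 1
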